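/- Let F be a finite field and G a finite abelian group. For u, v ∈ FG with u·v = 0, every element of the ideal FG·v^{(-1)} is orthogonal (under the Euclidean inner product of coefficient vectors) to every element of FG·u; that is, FG·v^{(-1)} ⊆ (FG·u)^⊥. -/

import Mathlib

/-- `v^{(-1)} = Σ_g v_{g⁻¹} g`. -/
def inv' {F G : Type*} [Field F] [CommGroup G] (v : MonoidAlgebra F G) :
    MonoidAlgebra F G :=
  MonoidAlgebra.ofCoeff (Finsupp.equivMapDomain (Equiv.inv G) v.coeff)

lemma inv'_apply {F G : Type*} [Field F] [CommGroup G] (v : MonoidAlgebra F G) (x : G) :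
    (inv' v).coeff x = v.coeff x⁻¹ := rfl

lemma inv'_eq_domCongr {F G : Type*} [Field F] [CommGroup G] (v : MonoidAlgebra F G) :
    inv' v = MonoidAlgebra.domCongr F F (MulEquiv.inv G) v := by
  ext x; simp [inv'_apply]

lemma inv'_mul {F G : Type*} [Field F] [CommGroup G] (x y : MonoidAlgebra F G) :
    inv' (x * y) = inv' x * inv' y := by
  simp [inv'_eq_domCongr, map_mul]

lemma inner_eq {F G : Type*} [Field F] [CommGroup G] [Fintype G]
    (a c : MonoidAlgebra F G) :
    ∑ g : G, a.coeff g * c.coeff g = (a * inv' c).coeff 1 := by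
  classical
  rw [MonoidAlgebra.mul_apply_antidiagonal a (inv' c) 1
    (Finset.univ.image fun g : G => (g, g⁻¹))]
  · rw [Finset.sum_image (by intro x _ y _ hxy; exact (Prod.mk.injEq _ _ _ _ ▸ hxy).1)]
    simp [inv'_apply]
  · intro p
    simp only [Finset.mem_image, Finset.mem_univ, true_and]
    constructor
    · rintro ⟨g, rfl⟩; simp
    · intro hp
      exact ⟨p.1, by rw [Prod.ext_iff]; exact ⟨rfl, by rw [inv_eq_iff_mul_eq_one]; exact hp⟩⟩

theorem stmt_5 (F G : Type*) [Field F] [Fintype F] [CommGroup G] [Fintype G]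
    (u v : MonoidAlgebra F G) (h : u * v = 0) :
    ∀ a ∈ (Ideal.span {inv' v} : Ideal (MonoidAlgebra F G)),
      ∀ c ∈ (Ideal.span {u} : Ideal (MonoidAlgebra F G)), ∑ g : G, a.coeff g * c.coeff g = 0 := by
  intro a ha c hc
  obtain ⟨r, rfl⟩ := Ideal.mem_span_singleton'.mp ha
  obtain ⟨s, rfl⟩ := Ideal.mem_span_singleton'.mp hc
  rw [inner_eq]
  have : r * inv' v * inv' (s * u) = r * inv' s * inv' (u * v) := by
    rw [inv'_mul, inv'_mul]; ring
  rw [this, h]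
  simp [inv']
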